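/- Let ρ > 0, β ∈ (0,1) and C > 0 and suppose B : ℕ → ℝ satisfies 0 ≤ B(k) ≤ C·k^{ρ+1} for all k ≥ 1. Let a(k,n) = ∏_{j=1}^{k-1}(1 − j/n) and set s(n) = ⌊n^{2/(3+β)}⌋. Then ∑_{k=s(n)+1}^{n} a(k,n)·k·B(k) = O(n^{(3+ρ−β)/2}) as n → ∞; precisely, there exist constants K and N such that for all n ≥ N, ∑_{k=s(n)+1}^{n} a(k,n)·k·B(k) ≤ K·n^{(3+ρ−β)/2}. -/

import Mathlib

/-- `a(k,n) = (1 - 1/n)(1 - 2/n) ⋯ (1 - (k-1)/n)`, with the empty product `a(1,n) = 1`. -/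
noncomputable def aProd (k n : ℕ) : ℝ :=
  ∏ j ∈ Finset.range (k - 1), (1 - ((j : ℝ) + 1) / n)

lemma sq_half_le_sum_range (m : ℕ) :
    (m : ℝ) ^ 2 / 2 ≤ ∑ j ∈ Finset.range m, ((j : ℝ) + 1) := by
  induction m with
  | zero => simp
  | succ m ih =>
    rw [Finset.sum_range_succ]
    push_cast
    nlinarith

/-- If `0 ≤ B(k) ≤ C·k^{ρ+1}` for all `k ≥ 1` and `s(n) = ⌊n^{2/(3+β)}⌋`, then
`∑_{k=s(n)+1}^{n} a(k,n)·k·B(k) = O(n^{(3+ρ−β)/2})` as `n → ∞`. -/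
theorem tail_sum_bound (ρ β C : ℝ) (hρ : 0 < ρ) (hβ0 : 0 < β) (hβ1 : β < 1) (hC : 0 < C)
    (B : ℕ → ℝ) (hB : ∀ k : ℕ, 1 ≤ k → 0 ≤ B k ∧ B k ≤ C * (k : ℝ) ^ (ρ + 1)) :
    ∃ K : ℝ, ∃ N : ℕ, ∀ n ≥ N,
      ∑ k ∈ Finset.Icc (⌊(n : ℝ) ^ (2 / (3 + β))⌋₊ + 1) n, aProd k n * (k : ℝ) * B k ≤
        K * (n : ℝ) ^ ((3 + ρ - β) / 2) := by
  have hβ3 : (0:ℝ) < 3 + β := by linarith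
  set q : ℝ := 2 / (3 + β) with hqdef
  have hqpos : 0 < q := by positivity
  set α : ℝ := (1 - β) / (3 + β) with hαdef
  have hαpos : 0 < α := by apply div_pos <;> linarith
  set c : ℝ := (ρ + 3 + β) / 2 with hcdef
  have hcpos : 0 < c := by simp only [hcdef]; linarith
  -- eventual facts on ℝ
  have F1 : ∀ᶠ x : ℝ in Filter.atTop, 2 ≤ x ^ q :=
    (tendsto_rpow_atTop hqpos).eventually_ge_atTop 2
  have F3 : ∀ᶠ x : ℝ in Filter.atTop, (1:ℝ) ≤ x := Filter.eventually_ge_atTop 1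
  have F2 : ∀ᶠ x : ℝ in Filter.atTop, Real.log C + c * Real.log x ≤ x ^ α / 8 := by
    have hlo := isLittleO_log_rpow_atTop hαpos
    have h1 : ∀ᶠ x : ℝ in Filter.atTop, ‖Real.log x‖ ≤ (1 / (16 * c)) * ‖x ^ α‖ :=
      hlo.def (by positivity)
    have h2 : ∀ᶠ x : ℝ in Filter.atTop, 16 * Real.log C ≤ x ^ α :=
      (tendsto_rpow_atTop hαpos).eventually_ge_atTop _
    filter_upwards [h1, h2, F3] with x hx1 hx2 hx3
    have hx0 : (0:ℝ) < x := by linarith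
    have hlog0 : 0 ≤ Real.log x := Real.log_nonneg hx3
    have hrp0 : 0 ≤ x ^ α := Real.rpow_nonneg (le_of_lt hx0) α
    rw [Real.norm_eq_abs, Real.norm_eq_abs, abs_of_nonneg hlog0, abs_of_nonneg hrp0] at hx1
    have : c * Real.log x ≤ x ^ α / 16 := by
      calc c * Real.log x ≤ c * ((1 / (16 * c)) * x ^ α) := by
            exact mul_le_mul_of_nonneg_left hx1 (le_of_lt hcpos)
        _ = x ^ α / 16 := by field_simp
    linarith
  have Fall : ∀ᶠ n : ℕ in Filter.atTop,
      2 ≤ (n:ℝ) ^ q ∧ (Real.log C + c * Real.log n ≤ (n:ℝ) ^ α / 8) ∧ (1:ℝ) ≤ (n:ℝ) :=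
    tendsto_natCast_atTop_atTop.eventually (F1.and (F2.and F3))
  rw [Filter.eventually_atTop] at Fall
  obtain ⟨N, hN⟩ := Fall
  refine ⟨1, N, fun n hn => ?_⟩
  obtain ⟨hE1, hE2, hE3⟩ := hN n hn
  have hn0 : (0:ℝ) < n := by linarith
  have hn1 : 1 ≤ n := by exact_mod_cast hE3
  set s : ℕ := ⌊(n : ℝ) ^ q⌋₊ with hsdef
  -- lower bound on s
  have hs2 : (n:ℝ) ^ q / 2 ≤ (s:ℝ) := by
    have := Nat.sub_one_lt_floor ((n : ℝ) ^ q)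
    linarith
  -- the per-term bound
  set E : ℝ := Real.exp (-((s:ℝ) ^ 2 / (2 * n))) with hEdef
  have hterm : ∀ k ∈ Finset.Icc (s + 1) n,
      aProd k n * (k : ℝ) * B k ≤ E * n * (C * (n:ℝ) ^ (ρ + 1)) := by
    intro k hk
    rw [Finset.mem_Icc] at hk
    obtain ⟨hk1, hk2⟩ := hk
    have hk1' : 1 ≤ k := le_trans (Nat.le_add_left 1 s) hk1
    obtain ⟨hB0, hBle⟩ := hB k hk1'
    have hkn : (k:ℝ) ≤ n := by exact_mod_cast hk2
    have haP : aProd k n ≤ E := by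
      have hstep1 : aProd k n ≤
          ∏ j ∈ Finset.range (k - 1), Real.exp (-(((j : ℝ) + 1) / n)) := by
        apply Finset.prod_le_prod
        · intro j hj
          rw [Finset.mem_range] at hj
          have hjn : (j:ℝ) + 1 ≤ n := by
            have : j + 1 ≤ n := by omega
            exact_mod_cast this
          have : ((j:ℝ) + 1) / n ≤ 1 := by
            rw [div_le_one hn0]; exact hjn
          linarith
        · intro j _
          have := Real.add_one_le_exp (-(((j : ℝ) + 1) / n))
          linarith
      have hstep2 : ∏ j ∈ Finset.range (k - 1), Real.exp (-(((j : ℝ) + 1) / n)) =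
          Real.exp (-((∑ j ∈ Finset.range (k - 1), ((j : ℝ) + 1)) / n)) := by
        rw [← Real.exp_sum]
        congr 1
        rw [Finset.sum_neg_distrib, ← Finset.sum_div]
      have hsub : Finset.range s ⊆ Finset.range (k - 1) := by
        apply Finset.range_subset_range.mpr; omega
      have hsum : (s:ℝ) ^ 2 / 2 ≤ ∑ j ∈ Finset.range (k - 1), ((j : ℝ) + 1) := by
        calc (s:ℝ) ^ 2 / 2 ≤ ∑ j ∈ Finset.range s, ((j : ℝ) + 1) := sq_half_le_sum_range s
          _ ≤ ∑ j ∈ Finset.range (k - 1), ((j : ℝ) + 1) :=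
            Finset.sum_le_sum_of_subset_of_nonneg hsub (by intro i _ _; positivity)
      calc aProd k n ≤ _ := hstep1
        _ = _ := hstep2
        _ ≤ E := by
          rw [hEdef, Real.exp_le_exp, neg_le_neg_iff,
            show (s:ℝ) ^ 2 / (2 * (n:ℝ)) = ((s:ℝ) ^ 2 / 2) / n by ring]
          gcongr
    have haP0 : 0 ≤ aProd k n := by
      apply Finset.prod_nonneg
      intro j hj
      rw [Finset.mem_range] at hj
      have hjn : (j:ℝ) + 1 ≤ n := by
        have : j + 1 ≤ n := by omega
        exact_mod_cast this
      have : ((j:ℝ) + 1) / n ≤ 1 := by rw [div_le_one hn0]; exact hjn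
      linarith
    have hBn : B k ≤ C * (n:ℝ) ^ (ρ + 1) := by
      refine le_trans hBle ?_
      apply mul_le_mul_of_nonneg_left _ (le_of_lt hC)
      exact Real.rpow_le_rpow (by positivity) hkn (by linarith)
    have hk0 : (0:ℝ) ≤ k := by positivity
    calc aProd k n * (k : ℝ) * B k ≤ E * (k:ℝ) * B k := by
          apply mul_le_mul_of_nonneg_right (mul_le_mul_of_nonneg_right haP hk0) hB0
      _ ≤ E * n * B k := by
          apply mul_le_mul_of_nonneg_right (mul_le_mul_of_nonneg_left hkn (Real.exp_nonneg _)) hB0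
      _ ≤ E * n * (C * (n:ℝ) ^ (ρ + 1)) := by
          apply mul_le_mul_of_nonneg_left hBn
          positivity
  -- sum bound
  have hsum_le : ∑ k ∈ Finset.Icc (s + 1) n, aProd k n * (k : ℝ) * B k ≤
      (n:ℝ) * (E * n * (C * (n:ℝ) ^ (ρ + 1))) := by
    calc ∑ k ∈ Finset.Icc (s + 1) n, aProd k n * (k : ℝ) * B k
        ≤ (Finset.Icc (s + 1) n).card • (E * n * (C * (n:ℝ) ^ (ρ + 1))) :=
          Finset.sum_le_card_nsmul _ _ _ hterm
      _ = ((Finset.Icc (s + 1) n).card : ℝ) * (E * n * (C * (n:ℝ) ^ (ρ + 1))) := by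
          rw [nsmul_eq_mul]
      _ ≤ (n:ℝ) * (E * n * (C * (n:ℝ) ^ (ρ + 1))) := by
          apply mul_le_mul_of_nonneg_right _ (by positivity)
          rw [Nat.card_Icc]
          have : n + 1 - (s + 1) ≤ n := by omega
          exact_mod_cast this
  -- E ≤ exp(-(n^α/8))
  have hEbound : E ≤ Real.exp (-((n:ℝ) ^ α / 8)) := by
    rw [hEdef, Real.exp_le_exp, neg_le_neg_iff, div_le_div_iff₀ (by norm_num) (by positivity)]
    have hqq : (n:ℝ) ^ q * (n:ℝ) ^ q = (n:ℝ) ^ (q + q) := (Real.rpow_add hn0 q q).symm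
    have h2q : (n:ℝ) ^ α * (n:ℝ) = (n:ℝ) ^ (q + q) := by
      rw [← Real.rpow_add_one hn0.ne']
      congr 1
      rw [hαdef, hqdef]
      field_simp
      ring
    have hq0 : (0:ℝ) ≤ (n:ℝ) ^ q := Real.rpow_nonneg hn0.le q
    have hsq : ((n:ℝ) ^ q / 2) ^ 2 ≤ (s:ℝ) ^ 2 := by
      apply pow_le_pow_left₀ (by positivity) hs2
    nlinarith [hsq, hqq, h2q]
  -- final comparison
  have hfinal : (n:ℝ) * (Real.exp (-((n:ℝ) ^ α / 8)) * n * (C * (n:ℝ) ^ (ρ + 1))) ≤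
      1 * (n : ℝ) ^ ((3 + ρ - β) / 2) := by
    rw [hcdef] at hE2
    have p1 : ((n:ℝ) ^ (ρ + 1)) ≠ 0 := by positivity
    have p2 : (C * (n:ℝ) ^ (ρ + 1)) ≠ 0 := by positivity
    have p3 : (Real.exp (-((n:ℝ) ^ α / 8)) * n) ≠ 0 := by positivity
    have p4 : (Real.exp (-((n:ℝ) ^ α / 8)) * n * (C * (n:ℝ) ^ (ρ + 1))) ≠ 0 := by positivity
    rw [one_mul, ← Real.log_le_log_iff (by positivity) (by positivity), Real.log_rpow hn0,
      Real.log_mul hn0.ne' p4, Real.log_mul p3 p2, Real.log_mul (Real.exp_pos _).ne' hn0.ne',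
      Real.log_mul hC.ne' p1, Real.log_exp, Real.log_rpow hn0]
    nlinarith [hE2]
  calc ∑ k ∈ Finset.Icc (s + 1) n, aProd k n * (k : ℝ) * B k
      ≤ (n:ℝ) * (E * n * (C * (n:ℝ) ^ (ρ + 1))) := hsum_le
    _ ≤ (n:ℝ) * (Real.exp (-((n:ℝ) ^ α / 8)) * n * (C * (n:ℝ) ^ (ρ + 1))) := by
        apply mul_le_mul_of_nonneg_left _ (by positivity)
        apply mul_le_mul_of_nonneg_right _ (by positivity)
        exact mul_le_mul_of_nonneg_right hEbound (by positivity)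
    _ ≤ 1 * (n : ℝ) ^ ((3 + ρ - β) / 2) := hfinal
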